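/- Conversely, given any M-cover of the Tanner graph of H and any labelling of the variable-vertex copies satisfying all lifted parity checks, defining h_i^{(α)} as the number of copies of u_i labelled α (for α ∈ R⁻) and z_{j,b} as the number of copies of check vertex v_j whose neighbouring variable labels equal b, the pair (h, z) is an LP pseudocodeword of C with parameter M. -/

import Mathlib

/-- The single parity-check code `C_j` of row `j` of `H`, represented as full-length
vectors supported on `I_j = supp(H_j)` and satisfying the `j`-th parity check. -/
def localCode {m n : ℕ} {R : Type} [CommRing R] [Fintype R] [DecidableEq R]
    (H : Matrix (Fin m) (Fin n) R) (j : Fin m) : Finset (Fin n → R) :=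
  Finset.univ.filter (fun b => (∀ i, H j i = 0 → b i = 0) ∧ (∑ i, b i * H j i) = 0)
/-- `(h, z)` is an LP pseudocodeword with scaling parameter `M`: the `z_{j,b}` are
nonnegative integers summing to `M` on each local code `C_j`, and `h` is the induced
(integer) marginal at every supported coordinate. -/
def isLPpcw {m n : ℕ} {R : Type} [CommRing R] [Fintype R] [DecidableEq R]
    (H : Matrix (Fin m) (Fin n) R) (M : ℕ)
    (h : Fin n → {α : R // α ≠ 0} → ℕ) (z : Fin m → (Fin n → R) → ℕ) : Prop :=
  (∀ j, ∑ b ∈ localCode H j, z j b = M) ∧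
  (∀ j i (α : {α : R // α ≠ 0}), H j i ≠ 0 →
    h i α = ∑ b ∈ (localCode H j).filter (fun b => b i = α.val), z j b)

lemma b_mem_localCode {m n : ℕ} {R : Type} [CommRing R] [Fintype R] [DecidableEq R]
    (H : Matrix (Fin m) (Fin n) R)
    (M : ℕ) (π : Fin m → Fin n → Equiv.Perm (Fin M))
    (p : Fin n → Fin M → R)
    (hchecks : ∀ j l, ∑ i, p i (π j i l) * H j i = 0) (j : Fin m) (l : Fin M) :
    (fun i => if H j i = 0 then 0 else p i (π j i l)) ∈ localCode H j := by
  simp only [localCode, Finset.mem_filter, Finset.mem_univ, true_and]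
  constructor
  · intro i h; simp [h]
  · have heq : (∑ i, (if H j i = 0 then 0 else p i (π j i l)) * H j i)
        = ∑ i, p i (π j i l) * H j i := by
      apply Finset.sum_congr rfl
      intro i _
      by_cases h : H j i = 0
      · simp [h]
      · rw [if_neg h]
    rw [heq]
    exact hchecks j l

/-- every graph-cover pseudocodeword gives an LP pseudocodeword. Given an
`M`-cover of the Tanner graph (encoded by permutations `π j i`) and a labelling `p` of
the variable-vertex copies satisfying all lifted checks, setting `h_i^{(α)}` to the
number of copies of `u_i` labelled `α` and `z_{j,b}` to the number of copies of `v_j`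
whose neighbouring variable labels equal `b` yields an LP pseudocodeword with
parameter `M`, with `z_{j,b} ≠ 0` only for `b ∈ C_j`. -/
theorem graph_cover_pcw_to_lp_pcw {m n : ℕ} {R : Type}
    [CommRing R] [Fintype R] [DecidableEq R]
    (H : Matrix (Fin m) (Fin n) R)
    (M : ℕ) (π : Fin m → Fin n → Equiv.Perm (Fin M))
    (p : Fin n → Fin M → R)
    (hchecks : ∀ j l, ∑ i, p i (π j i l) * H j i = 0) :
    isLPpcw H M
      (fun i α => (Finset.univ.filter (fun l : Fin M => p i l = α.val)).card)
      (fun j b => (Finset.univ.filter (fun l : Fin M =>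
        (fun i => if H j i = 0 then 0 else p i (π j i l)) = b)).card) ∧
    (∀ j (b : Fin n → R),
      (Finset.univ.filter (fun l : Fin M =>
        (fun i => if H j i = 0 then 0 else p i (π j i l)) = b)).card ≠ 0 →
      b ∈ localCode H j) := by
  have hmem := b_mem_localCode H M π p hchecks
  refine ⟨⟨?_, ?_⟩, ?_⟩
  · intro j
    rw [← Finset.card_eq_sum_card_fiberwise (f := fun l : Fin M =>
        (fun i => if H j i = 0 then 0 else p i (π j i l))) (fun l _ => hmem j l)]
    simp
  · intro j i α hne
    -- card of {l : p i l = α} equals card of {l : p i (π j i l) = α}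
    have hcard : (Finset.univ.filter (fun l : Fin M => p i l = α.val)).card
        = (Finset.univ.filter (fun l : Fin M => p i (π j i l) = α.val)).card := by
      apply Finset.card_nbij' (i := fun l => (π j i).symm l) (j := fun l => π j i l)
      · intro l hl
        simp only [Finset.mem_filter, Finset.mem_univ, true_and] at *
        simpa using hl
      · intro l hl
        simp only [Finset.mem_filter, Finset.mem_univ, true_and] at *
        simpa using hl
      · intro l _; simp
      · intro l _; simp
    beta_reduce
    rw [hcard]
    have hterm : ∀ b ∈ (localCode H j).filter (fun b => b i = α.val),
        (Finset.univ.filter (fun l : Fin M =>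
          (fun i => if H j i = 0 then 0 else p i (π j i l)) = b)).card
        = ((Finset.univ.filter (fun l : Fin M => p i (π j i l) = α.val)).filter
            (fun l => (fun i => if H j i = 0 then 0 else p i (π j i l)) = b)).card := by
      intro b hb
      congr 1
      ext l
      simp only [Finset.mem_filter, Finset.mem_univ, true_and]
      constructor
      · intro h
        refine ⟨?_, h⟩
        have hi := congrFun h i
        simp only [if_neg hne] at hi
        rw [hi]
        exact (Finset.mem_filter.mp hb).2
      · exact fun h => h.2
    rw [Finset.sum_congr rfl hterm]
    apply Finset.card_eq_sum_card_fiberwise (f := fun l : Fin M =>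
        (fun i => if H j i = 0 then 0 else p i (π j i l)))
    intro l hl
    simp only [Finset.mem_coe, Finset.mem_filter, Finset.mem_univ, true_and] at *
    exact ⟨hmem j l, by simp [hne, hl]⟩
  · intro j b hb
    obtain ⟨l, hl⟩ := Finset.card_ne_zero.mp hb |>.exists_mem
    simp only [Finset.mem_filter, Finset.mem_univ, true_and] at hl
    rw [← hl]
    exact hmem j l
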